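/- Partial-participation variance bound (core of the bound (eq. server-strong-partial-1)). Let E be a real Hilbert space, W_1,…,W_N square-integrable E-valued random vectors, a_1,…,a_N ≥ 0 real weights, and I_1,…,I_N {0,1}-valued random variables with ℙ(I_n = 1) = q_n ∈ (0,1], such that the random vector (I_1,…,I_N) is independent of the random vector (W_1,…,W_N). Then 𝔼[‖∑_{n=1}^N (a_n I_n/q_n)·W_n − ∑_{n=1}^N a_n·W_n‖²] ≤ N·∑_{n=1}^N (a_n²/q_n)·𝔼[‖W_n‖²]. -/

import Mathlib

open MeasureTheory ProbabilityTheory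

/-- Partial-participation variance bound (core of (eq. server-strong-partial-1)). -/
theorem stmt_13 {E : Type*} [NormedAddCommGroup E] [InnerProductSpace ℝ E] [CompleteSpace E]
    [MeasurableSpace E] [BorelSpace E]
    {Ω : Type*} [MeasurableSpace Ω] (μ : Measure Ω) [IsProbabilityMeasure μ]
    (N : ℕ) (W : Fin N → Ω → E) (hW : ∀ n, MemLp (W n) 2 μ)
    (a : Fin N → ℝ) (ha : ∀ n, 0 ≤ a n)
    (I : Fin N → Ω → ℝ) (hImeas : ∀ n, Measurable (I n))
    (hI01 : ∀ n ω, I n ω = 0 ∨ I n ω = 1)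
    (q : Fin N → ℝ) (hq : ∀ n, 0 < q n ∧ q n ≤ 1)
    (hIq : ∀ n, μ {ω | I n ω = 1} = ENNReal.ofReal (q n))
    (hindep : IndepFun (fun ω => fun n => I n ω) (fun ω => fun n => W n ω) μ) :
    ∫ ω, ‖(∑ n, (a n * I n ω / q n) • W n ω) - ∑ n, a n • W n ω‖ ^ 2 ∂μ ≤
      N * ∑ n, (a n) ^ 2 / q n * ∫ ω, ‖W n ω‖ ^ 2 ∂μ := by
  set c : Fin N → Ω → ℝ := fun n ω => a n * I n ω / q n - a n with hc
  -- integrability of ‖W n‖²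
  have hWsq : ∀ n, Integrable (fun ω => ‖W n ω‖ ^ 2) μ := fun n => (hW n).norm.integrable_sq
  have hWsq_nonneg : ∀ n, 0 ≤ ∫ ω, ‖W n ω‖ ^ 2 ∂μ := fun n =>
    integral_nonneg fun ω => sq_nonneg _
  -- the per-term integrand
  set g : Fin N → Ω → ℝ := fun n ω => (c n ω) ^ 2 * ‖W n ω‖ ^ 2 with hg
  have hcbdd : ∀ n ω, ‖(c n ω) ^ 2‖ ≤ (a n / q n) ^ 2 := by
    intro n ω
    obtain ⟨hq0, hq1⟩ := hq n
    have ha' := ha n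
    have haq : a n ≤ a n / q n := le_div_self ha' hq0 hq1
    rw [Real.norm_eq_abs, abs_of_nonneg (sq_nonneg _)]
    rcases hI01 n ω with h | h
    · simp only [hc, h, mul_zero, zero_div, zero_sub, neg_sq]
      exact pow_le_pow_left₀ ha' haq 2
    · simp only [hc, h, mul_one]
      have h1 : 0 ≤ a n / q n - a n := sub_nonneg.2 haq
      have h2 : a n / q n - a n ≤ a n / q n := by linarith
      exact pow_le_pow_left₀ h1 h2 2
  have hcmeas : ∀ n, Measurable (fun ω => (c n ω) ^ 2) :=
    fun n => (((measurable_const.mul (hImeas n)).div_const _).sub measurable_const).pow_const 2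
  have hgint : ∀ n, Integrable (g n) μ := fun n =>
    (hWsq n).bdd_mul (hcmeas n).aestronglyMeasurable (ae_of_all _ fun ω => hcbdd n ω)
  -- pointwise Cauchy-Schwarz bound
  have hptwise : ∀ ω, ‖(∑ n, (a n * I n ω / q n) • W n ω) - ∑ n, a n • W n ω‖ ^ 2
      ≤ N * ∑ n, g n ω := by
    intro ω
    have h1 : (∑ n, (a n * I n ω / q n) • W n ω) - ∑ n, a n • W n ω
        = ∑ n, c n ω • W n ω := by
      rw [← Finset.sum_sub_distrib]
      exact Finset.sum_congr rfl fun n _ => (sub_smul _ _ _).symm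
    rw [h1]
    calc ‖∑ n, c n ω • W n ω‖ ^ 2 ≤ (∑ n, ‖c n ω • W n ω‖) ^ 2 :=
          pow_le_pow_left₀ (norm_nonneg _) (norm_sum_le _ _) 2
      _ ≤ (Finset.univ.card : ℝ) * ∑ n, ‖c n ω • W n ω‖ ^ 2 := sq_sum_le_card_mul_sum_sq
      _ = N * ∑ n, g n ω := by
          simp only [Finset.card_univ, Fintype.card_fin, hg, norm_smul, mul_pow,
            Real.norm_eq_abs, sq_abs]
  have key : ∫ ω, ‖(∑ n, (a n * I n ω / q n) • W n ω) - ∑ n, a n • W n ω‖ ^ 2 ∂μ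
      ≤ ∫ ω, (N : ℝ) * ∑ n, g n ω ∂μ :=
    integral_mono_of_nonneg (ae_of_all _ fun ω => sq_nonneg _)
      ((integrable_finset_sum _ fun n _ => hgint n).const_mul _) (ae_of_all _ hptwise)
  rw [integral_const_mul, integral_finset_sum _ fun n _ => hgint n] at key
  refine key.trans ?_
  -- independence per coordinate
  have hInd : ∀ n : Fin N, IndepFun (fun ω => (c n ω) ^ 2) (fun ω => ‖W n ω‖ ^ 2) μ := by
    intro n
    have h0 : IndepFun (I n) (W n) μ :=
      hindep.comp (measurable_pi_apply n) (measurable_pi_apply n)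
    exact h0.comp (φ := fun x : ℝ => (a n * x / q n - a n) ^ 2)
      (ψ := fun y : E => ‖y‖ ^ 2)
      ((((measurable_const.mul measurable_id).div_const _).sub measurable_const).pow_const 2)
      (measurable_norm.pow_const 2)
  -- integral of I n
  have hIint : ∀ n, ∫ ω, I n ω ∂μ = q n := by
    intro n
    have hset : MeasurableSet {ω | I n ω = 1} := hImeas n (measurableSet_singleton 1)
    have hrep : (fun ω => I n ω) = Set.indicator {ω | I n ω = 1} 1 := by
      funext ω
      rcases hI01 n ω with h | h <;>
        simp [Set.indicator_apply, Set.mem_setOf_eq, h]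
    rw [hrep, integral_indicator_one hset, measureReal_def, hIq n, ENNReal.toReal_ofReal (hq n).1.le]
  have hIintg : ∀ n, Integrable (I n) μ := fun n =>
    (integrable_const (1 : ℝ)).mono (hImeas n).aestronglyMeasurable
      (ae_of_all _ fun ω => by rcases hI01 n ω with h | h <;> simp [h])
  -- second moment of c n
  have hcint : ∀ n, ∫ ω, (c n ω) ^ 2 ∂μ ≤ (a n) ^ 2 / q n := by
    intro n
    obtain ⟨hq0, hq1⟩ := hq n
    have hpt : ∀ ω, (c n ω) ^ 2
        = ((a n / q n - a n) ^ 2 - (a n) ^ 2) * I n ω + (a n) ^ 2 := by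
      intro ω; rcases hI01 n ω with h | h <;> simp [hc, h] <;> ring
    have heq : ∫ ω, (c n ω) ^ 2 ∂μ
        = ((a n / q n - a n) ^ 2 - (a n) ^ 2) * q n + (a n) ^ 2 := by
      rw [integral_congr_ae (ae_of_all _ hpt),
        integral_add ((hIintg n).const_mul _) (integrable_const _),
        integral_const_mul, hIint n]
      simp [measure_univ]
    rw [heq]
    have haq : a n = (a n / q n) * q n := (div_mul_cancel₀ _ hq0.ne').symm
    set t := a n / q n with ht
    rw [haq]
    have h3 : (t * q n) ^ 2 / q n = t ^ 2 * q n := by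
      field_simp
    rw [h3]
    nlinarith [sq_nonneg (t * q n)]
  -- put it together
  have hterm : ∀ n : Fin N, ∫ ω, g n ω ∂μ ≤ (a n) ^ 2 / q n * ∫ ω, ‖W n ω‖ ^ 2 ∂μ := by
    intro n
    have hmul : ∫ ω, g n ω ∂μ
        = (∫ ω, (c n ω) ^ 2 ∂μ) * ∫ ω, ‖W n ω‖ ^ 2 ∂μ :=
      (hInd n).integral_fun_mul_eq_mul_integral (hcmeas n).aestronglyMeasurable
        ((hW n).aestronglyMeasurable.norm.pow 2)
    rw [hmul]
    exact mul_le_mul_of_nonneg_right (hcint n) (hWsq_nonneg n)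
  exact mul_le_mul_of_nonneg_left (Finset.sum_le_sum fun n _ => hterm n) (Nat.cast_nonneg N)
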